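/- Let Θ ∈ ℝ and z > 0 with x² + y² ≤ z. Define X on [0,∞) by: X(t) = ((x/√z)(z²-4t)^{1/4}, (y/√z)(z²-4t)^{1/4}, √(z²-4t)) for t ∈ [0, z²/4], and X(t) = ((4t-z²)^{1/4}/√z · (x cos Θ − y sin Θ), (4t-z²)^{1/4}/√z · (x sin Θ + y cos Θ), −√(4t-z²)) for t ≥ z²/4. Then X is continuous on [0,∞), differentiable on (0,∞) \ {z²/4}, and satisfies the ODE X'(t) = b(X(t)) at every t ∈ (0,∞) \ {z²/4}; in particular X is an absolutely continuous integral solution of the ODE with X(0) = (x,y,z). -/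

import Mathlib

open Real

/-- The double paraboloid `P = {x² + y² ≤ |z|}`. -/
def Pset : Set (ℝ × ℝ × ℝ) := {p | p.1 ^ 2 + p.2.1 ^ 2 ≤ |p.2.2|}

open Classical in
noncomputable def bfield (p : ℝ × ℝ × ℝ) : ℝ × ℝ × ℝ :=
  if p ∈ Pset ∧ p.2.2 ≠ 0 then
    (-Real.sign p.2.2 * p.1 / p.2.2 ^ 2,
     -Real.sign p.2.2 * p.2.1 / p.2.2 ^ 2,
     -2 / |p.2.2|)
  else (0, 0, 0)

open Classical in
/-- The piecewise trajectory through the origin rotated by `Θ`. -/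
noncomputable def XΘ (Θ x y z : ℝ) (t : ℝ) : ℝ × ℝ × ℝ :=
  if t ≤ z ^ 2 / 4 then
    (x / Real.sqrt z * (z ^ 2 - 4 * t) ^ ((1 : ℝ) / 4),
     y / Real.sqrt z * (z ^ 2 - 4 * t) ^ ((1 : ℝ) / 4),
     Real.sqrt (z ^ 2 - 4 * t))
  else
    ((4 * t - z ^ 2) ^ ((1 : ℝ) / 4) / Real.sqrt z * (x * Real.cos Θ - y * Real.sin Θ),
     (4 * t - z ^ 2) ^ ((1 : ℝ) / 4) / Real.sqrt z * (x * Real.sin Θ + y * Real.cos Θ),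
     -Real.sqrt (4 * t - z ^ 2))

lemma quarter_sq {s : ℝ} (hs : 0 ≤ s) : (s ^ ((1:ℝ)/4)) ^ 2 = Real.sqrt s := by
  rw [← Real.rpow_natCast (s ^ ((1:ℝ)/4)) 2, ← Real.rpow_mul hs, Real.sqrt_eq_rpow]
  norm_num

/-- The piecewise curve `XΘ` is continuous on `[0,∞)`, starts at `(x,y,z)` and solves
`X' = b(X)` at every positive time except `t = z²/4`. -/
theorem piecewise_flow_solves_ODE (Θ x y z : ℝ) (hz : 0 < z) (hP : x ^ 2 + y ^ 2 ≤ z) :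
    ContinuousOn (XΘ Θ x y z) (Set.Ici (0 : ℝ)) ∧
    XΘ Θ x y z 0 = (x, y, z) ∧
    ∀ t ∈ Set.Ioi (0 : ℝ) \ {z ^ 2 / 4},
      HasDerivAt (XΘ Θ x y z) (bfield (XΘ Θ x y z t)) t := by
  have hsz : (0:ℝ) < Real.sqrt z := Real.sqrt_pos.2 hz
  refine ⟨?_, ?_, ?_⟩
  · -- continuity
    have hc : Continuous (XΘ Θ x y z) := by
      unfold XΘ
      apply Continuous.if_le
      · refine Continuous.prodMk ?_ (Continuous.prodMk ?_ ?_)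
        · exact continuous_const.mul ((by continuity : Continuous fun t : ℝ => z ^ 2 - 4 * t).rpow_const
            (fun _ => Or.inr (by norm_num)))
        · exact continuous_const.mul ((by continuity : Continuous fun t : ℝ => z ^ 2 - 4 * t).rpow_const
            (fun _ => Or.inr (by norm_num)))
        · exact Real.continuous_sqrt.comp (by continuity)
      · refine Continuous.prodMk ?_ (Continuous.prodMk ?_ ?_)
        · exact (((by continuity : Continuous fun t : ℝ => 4 * t - z ^ 2).rpow_const
            (fun _ => Or.inr (by norm_num))).div_const _).mul continuous_const
        · exact (((by continuity : Continuous fun t : ℝ => 4 * t - z ^ 2).rpow_const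
            (fun _ => Or.inr (by norm_num))).div_const _).mul continuous_const
        · exact (Real.continuous_sqrt.comp (by continuity)).neg
      · exact continuous_id
      · exact continuous_const
      · intro t ht
        have h1 : z ^ 2 - 4 * t = 0 := by rw [ht]; ring
        have h2 : 4 * t - z ^ 2 = 0 := by rw [ht]; ring
        rw [h1, h2]
        norm_num [Real.zero_rpow]
    exact hc.continuousOn
  · -- initial value
    have h0 : (0:ℝ) ≤ z ^ 2 / 4 := by positivity
    have hq : ((z ^ 2 : ℝ)) ^ ((1:ℝ)/4) = Real.sqrt z := by
      rw [← Real.rpow_natCast z 2, ← Real.rpow_mul hz.le, Real.sqrt_eq_rpow]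
      norm_num
    simp only [XΘ, if_pos h0, mul_zero, sub_zero]
    rw [hq, div_mul_cancel₀ _ hsz.ne', div_mul_cancel₀ _ hsz.ne',
      Real.sqrt_sq hz.le]
  · -- the ODE
    rintro t ⟨ht0, htne⟩
    simp only [Set.mem_Ioi] at ht0
    simp only [Set.mem_singleton_iff] at htne
    rcases lt_or_gt_of_ne htne with hlt | hgt
    · -- before the origin
      set s : ℝ := z ^ 2 - 4 * t with hs_def
      have hs : 0 < s := by simp only [hs_def]; linarith
      have hds : HasDerivAt (fun τ : ℝ => z ^ 2 - 4 * τ) (-4) t := by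
        simpa using ((hasDerivAt_id t).const_mul (4:ℝ)).const_sub (z ^ 2)
      have hrp : HasDerivAt (fun τ : ℝ => (z ^ 2 - 4 * τ) ^ ((1:ℝ)/4))
          ((-4) * (1/4) * s ^ ((1:ℝ)/4 - 1)) t := hds.rpow_const (Or.inl hs.ne')
      have h1 : HasDerivAt (fun τ : ℝ => x / Real.sqrt z * (z ^ 2 - 4 * τ) ^ ((1:ℝ)/4))
          (x / Real.sqrt z * ((-4) * (1/4) * s ^ ((1:ℝ)/4 - 1))) t := hrp.const_mul _
      have h2 : HasDerivAt (fun τ : ℝ => y / Real.sqrt z * (z ^ 2 - 4 * τ) ^ ((1:ℝ)/4))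
          (y / Real.sqrt z * ((-4) * (1/4) * s ^ ((1:ℝ)/4 - 1))) t := hrp.const_mul _
      have h3 : HasDerivAt (fun τ : ℝ => Real.sqrt (z ^ 2 - 4 * τ)) ((-4) / (2 * Real.sqrt s)) t :=
        hds.sqrt hs.ne'
      have hF := (h1.prodMk (h2.prodMk h3))
      have hEq : XΘ Θ x y z =ᶠ[nhds t] fun τ =>
          (x / Real.sqrt z * (z ^ 2 - 4 * τ) ^ ((1:ℝ)/4),
           y / Real.sqrt z * (z ^ 2 - 4 * τ) ^ ((1:ℝ)/4),
           Real.sqrt (z ^ 2 - 4 * τ)) := by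
        filter_upwards [Iio_mem_nhds hlt] with τ hτ
        rw [XΘ, if_pos (le_of_lt (Set.mem_Iio.mp hτ))]
      refine (hF.congr_of_eventuallyEq hEq).congr_deriv ?_
      -- identify the derivative with bfield (XΘ t)
      have hXt : XΘ Θ x y z t =
          (x / Real.sqrt z * s ^ ((1:ℝ)/4), y / Real.sqrt z * s ^ ((1:ℝ)/4), Real.sqrt s) := by
        simp [XΘ, if_pos hlt.le, hs_def]
      have hw : (0:ℝ) < Real.sqrt s := Real.sqrt_pos.2 hs
      have hmem : (x / Real.sqrt z * s ^ ((1:ℝ)/4), y / Real.sqrt z * s ^ ((1:ℝ)/4),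
          Real.sqrt s) ∈ Pset := by
        simp only [Pset, Set.mem_setOf_eq, abs_of_pos hw]
        have : (x / Real.sqrt z * s ^ ((1:ℝ)/4)) ^ 2 + (y / Real.sqrt z * s ^ ((1:ℝ)/4)) ^ 2
            = (x ^ 2 + y ^ 2) / z * Real.sqrt s := by
          have hzz : Real.sqrt z ^ 2 = z := Real.sq_sqrt hz.le
          rw [mul_pow, mul_pow, div_pow, div_pow, hzz, quarter_sq hs.le]; ring
        rw [this]
        exact mul_le_of_le_one_left hw.le (by rw [div_le_one hz]; exact hP)
      rw [hXt, bfield, if_pos ⟨hmem, hw.ne'⟩]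
      have hsq : Real.sqrt s ^ 2 = s := Real.sq_sqrt hs.le
      have hsign : Real.sign (Real.sqrt s) = 1 := Real.sign_of_pos hw
      have hrpow : s ^ ((1:ℝ)/4 - 1) = s ^ ((1:ℝ)/4) / s := by
        rw [Real.rpow_sub hs, Real.rpow_one]
      refine Prod.ext ?_ (Prod.ext ?_ ?_)
      · simp only [hsign, hsq, hrpow]; field_simp
      · simp only [hsign, hsq, hrpow]; field_simp
      · simp only [abs_of_pos hw]; field_simp; ring
    · -- after the origin
      set s : ℝ := 4 * t - z ^ 2 with hs_def
      have hs : 0 < s := by simp only [hs_def]; linarith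
      set A : ℝ := x * Real.cos Θ - y * Real.sin Θ with hA
      set B : ℝ := x * Real.sin Θ + y * Real.cos Θ with hB
      have hds : HasDerivAt (fun τ : ℝ => 4 * τ - z ^ 2) (4) t := by
        simpa using ((hasDerivAt_id t).const_mul (4:ℝ)).sub_const (z ^ 2)
      have hrp : HasDerivAt (fun τ : ℝ => (4 * τ - z ^ 2) ^ ((1:ℝ)/4))
          (4 * (1/4) * s ^ ((1:ℝ)/4 - 1)) t := hds.rpow_const (Or.inl hs.ne')
      have h1 : HasDerivAt (fun τ : ℝ => (4 * τ - z ^ 2) ^ ((1:ℝ)/4) / Real.sqrt z * A)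
          (4 * (1/4) * s ^ ((1:ℝ)/4 - 1) / Real.sqrt z * A) t :=
        (hrp.div_const _).mul_const _
      have h2 : HasDerivAt (fun τ : ℝ => (4 * τ - z ^ 2) ^ ((1:ℝ)/4) / Real.sqrt z * B)
          (4 * (1/4) * s ^ ((1:ℝ)/4 - 1) / Real.sqrt z * B) t :=
        (hrp.div_const _).mul_const _
      have h3 : HasDerivAt (fun τ : ℝ => -Real.sqrt (4 * τ - z ^ 2))
          (-(4 / (2 * Real.sqrt s))) t := (hds.sqrt hs.ne').neg
      have hF := (h1.prodMk (h2.prodMk h3))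
      have hEq : XΘ Θ x y z =ᶠ[nhds t] fun τ =>
          ((4 * τ - z ^ 2) ^ ((1:ℝ)/4) / Real.sqrt z * A,
           (4 * τ - z ^ 2) ^ ((1:ℝ)/4) / Real.sqrt z * B,
           -Real.sqrt (4 * τ - z ^ 2)) := by
        filter_upwards [Ioi_mem_nhds hgt] with τ hτ
        rw [XΘ, if_neg (not_le.2 (Set.mem_Ioi.mp hτ))]
      refine (hF.congr_of_eventuallyEq hEq).congr_deriv ?_
      have hXt : XΘ Θ x y z t =
          (s ^ ((1:ℝ)/4) / Real.sqrt z * A, s ^ ((1:ℝ)/4) / Real.sqrt z * B, -Real.sqrt s) := by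
        simp [XΘ, if_neg (not_le.2 hgt), hs_def, hA, hB]
      have hw : (0:ℝ) < Real.sqrt s := Real.sqrt_pos.2 hs
      have hABsq : A ^ 2 + B ^ 2 = x ^ 2 + y ^ 2 := by
        have h := Real.sin_sq_add_cos_sq Θ
        simp only [hA, hB]; nlinarith [h]
      have hmem : (s ^ ((1:ℝ)/4) / Real.sqrt z * A, s ^ ((1:ℝ)/4) / Real.sqrt z * B,
          -Real.sqrt s) ∈ Pset := by
        simp only [Pset, Set.mem_setOf_eq, abs_neg, abs_of_pos hw]
        have : (s ^ ((1:ℝ)/4) / Real.sqrt z * A) ^ 2 + (s ^ ((1:ℝ)/4) / Real.sqrt z * B) ^ 2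
            = (x ^ 2 + y ^ 2) / z * Real.sqrt s := by
          have hzz : Real.sqrt z ^ 2 = z := Real.sq_sqrt hz.le
          rw [mul_pow, mul_pow, div_pow, hzz, quarter_sq hs.le, ← hABsq]; ring
        rw [this]
        exact mul_le_of_le_one_left hw.le (by rw [div_le_one hz]; exact hP)
      have hwne : -Real.sqrt s ≠ 0 := by simpa using hw.ne'
      rw [hXt, bfield, if_pos ⟨hmem, hwne⟩]
      have hsq : Real.sqrt s ^ 2 = s := Real.sq_sqrt hs.le
      have hsign : Real.sign (-Real.sqrt s) = -1 := Real.sign_of_neg (by linarith)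
      have hrpow : s ^ ((1:ℝ)/4 - 1) = s ^ ((1:ℝ)/4) / s := by
        rw [Real.rpow_sub hs, Real.rpow_one]
      refine Prod.ext ?_ (Prod.ext ?_ ?_)
      · simp only [hsign, neg_sq, hsq, hrpow]
        field_simp
      · simp only [hsign, neg_sq, hsq, hrpow]
        field_simp
      · simp only [abs_neg, abs_of_pos hw]; field_simp; ring
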